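/- arXiv:2507.23024 — 2 statements merged into one kernel-verified Lean document; each statement's English description precedes it below -/
import Mathlib

section
/- Let k ≥ 2, and let d₁, d₂, d₃, n_r (r ≥ 2), t₃, t₅, t₇, j be nonnegative integers satisfying: (i) the Tjurina identity τ = (2k-1)² - d₁(2k-d₁-1) - (d₃-d₂+1) where τ = Σ_{r≥2}(r-1)²·n_r + 3t₃ + 5t₅ + 7t₇ + 10j; (ii) the Bézout count 2(k²-k) = Σ_{r≥2} C(r,2)·n_r + 2t₃ + 3t₅ + 4t₇ + 6j; (iii) d₁ + d₂ = 2k. Then d₁·d₂ + d₃ = Σ_{r≥2}(r-1)·n_r + t₃ + t₅ + t₇ + 2j + 2k. -/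
lemma two_choose_two (r : ℕ) : 2 * r.choose 2 = r * (r - 1) := by
  rcases r with _ | m
  · rfl
  · rw [Nat.choose_two_right]
    simp only [Nat.succ_sub_one]
    rw [Nat.mul_div_cancel']
    rw [Nat.mul_comm]
    exact (Nat.even_mul_succ_self m).two_dvd

/-- Combinatorial content of Lemma 3.1: for a plus-one generated arrangement of
`k ≥ 2` conics with quasi-homogeneous singularities, the Tjurina identity,
the Bézout count, and `d₁ + d₂ = 2k` imply
`d₁·d₂ + d₃ = Σ (r-1)·n_r + t₃ + t₅ + t₇ + 2j + 2k`. -/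
theorem stmt0 (k d1 d2 d3 t3 t5 t7 j : ℕ) (hk : 2 ≤ k)
    (S : Finset ℕ) (n : ℕ → ℕ) (hS : ∀ r ∈ S, 2 ≤ r)
    (htau : (∑ r ∈ S, ((r : ℤ) - 1) ^ 2 * n r) + 3 * t3 + 5 * t5 + 7 * t7 + 10 * j
      = (2 * (k : ℤ) - 1) ^ 2 - d1 * (2 * k - d1 - 1) - ((d3 : ℤ) - d2 + 1))
    (hbez : 2 * ((k : ℤ) ^ 2 - k)
      = (∑ r ∈ S, (r.choose 2 : ℤ) * n r) + 2 * t3 + 3 * t5 + 4 * t7 + 6 * j)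
    (hsum : d1 + d2 = 2 * k) :
    (d1 : ℤ) * d2 + d3
      = (∑ r ∈ S, ((r : ℤ) - 1) * n r) + t3 + t5 + t7 + 2 * j + 2 * k := by
  have key : ∑ r ∈ S, (2 * (r.choose 2 : ℤ)) * n r
      = ∑ r ∈ S, (((r : ℤ) - 1) ^ 2 * n r + ((r : ℤ) - 1) * n r) := by
    refine Finset.sum_congr rfl fun r hr => ?_
    have h2 := hS r hr
    have h := two_choose_two r
    have hc : (2 : ℤ) * (r.choose 2 : ℤ) = (r : ℤ) * ((r : ℤ) - 1) := by
      have : ((2 * r.choose 2 : ℕ) : ℤ) = ((r * (r - 1) : ℕ) : ℤ) := congrArg (Nat.cast : ℕ → ℤ) h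
      push_cast [Nat.cast_sub (by omega : 1 ≤ r)] at this
      linarith
    nlinarith [hc]
  rw [Finset.sum_add_distrib] at key
  have h2b : (2 : ℤ) * ∑ r ∈ S, (r.choose 2 : ℤ) * n r
      = ∑ r ∈ S, (2 * (r.choose 2 : ℤ)) * n r := by
    rw [Finset.mul_sum]; exact Finset.sum_congr rfl fun r _ => by ring
  have hd : (d1 : ℤ) + d2 = 2 * k := by exact_mod_cast hsum
  have hd2 : (d2 : ℤ) = 2 * k - d1 := by linarith
  rw [hd2] at htau ⊢
  nlinarith [htau, hbez, key, h2b]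
end

section
/- Let k ≥ 2 and let r, n₂, t₃ be nonnegative integers satisfying r² − r(2k−1) + (2k−1)² = n₂ + 3t₃ + 2 and 2k(k−1) = n₂ + 2t₃. Then n₂ ≤ 2; moreover n₂ is even, so n₂ ∈ {0, 2}. -/
/-- Minimal plus-one generated conic arrangements with nodes and tacnodes:
the two numerical constraints force `n₂ ≤ 2` and `n₂` even, hence `n₂ ∈ {0, 2}`. -/
theorem stmt6 (k r n2 t3 : ℤ) (hk : 2 ≤ k) (hr : 0 ≤ r) (hn2 : 0 ≤ n2) (ht3 : 0 ≤ t3)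
    (h1 : r ^ 2 - r * (2 * k - 1) + (2 * k - 1) ^ 2 = n2 + 3 * t3 + 2)
    (h2 : 2 * k * (k - 1) = n2 + 2 * t3) :
    n2 ≤ 2 ∧ Even n2 ∧ (n2 = 0 ∨ n2 = 2) := by
  have key : 0 ≤ (r - k) * (r - k + 1) := by
    rcases le_or_gt k r with h | h
    · nlinarith
    · nlinarith
  have hle : n2 ≤ 2 := by nlinarith
  have heq : n2 = 2 * (-k ^ 2 + k + 1 + r * (2 * k - 1) - r ^ 2) := by linarith
  have hev : Even n2 := ⟨-k ^ 2 + k + 1 + r * (2 * k - 1) - r ^ 2, by linarith⟩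
  refine ⟨hle, hev, ?_⟩
  interval_cases n2
  · left; rfl
  · exact absurd hev (by decide)
  · right; rfl
end
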